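/- Let p_1, …, p_k be pairwise coprime positive integers. Then the pseudocyclotomic polynomial satisfies Φ̃_{p_1,…,p_k}(x) = ∏ Φ_{m_1 m_2 ⋯ m_k}(x), where the product is over all tuples (m_1, …, m_k) with m_i ∣ p_i and m_i > 1 for every i. -/

import Mathlib

open Polynomial Finset

open Polynomial Finset

lemma prod_divisors_mul_coprime {M : Type*} [CommMonoid M] {n q : ℕ} (h : Nat.Coprime n q)
    (g : ℕ → M) :
    ∏ e ∈ (n * q).divisors, g e = ∏ m ∈ n.divisors, ∏ d ∈ q.divisors, g (m * d) := by
  rw [Nat.divisors_mul, Finset.mul_def, Finset.prod_image, Finset.prod_product]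
  rintro ⟨m, d⟩ hmd ⟨m', d'⟩ hmd' heq
  change m * d = m' * d' at heq
  simp only [Finset.mem_coe, Finset.mem_product, Nat.mem_divisors] at hmd hmd'
  obtain ⟨⟨hm, hn0⟩, hd, hq0⟩ := hmd
  obtain ⟨⟨hm', _⟩, hd', _⟩ := hmd'
  have hcop1 : Nat.Coprime m d' := Nat.Coprime.coprime_dvd_left hm (Nat.Coprime.coprime_dvd_right hd' h)
  have hcop2 : Nat.Coprime m' d := Nat.Coprime.coprime_dvd_left hm' (Nat.Coprime.coprime_dvd_right hd h)
  have h1 : m ∣ m' := hcop1.dvd_of_dvd_mul_right ⟨d, heq.symm⟩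
  have h2 : m' ∣ m := hcop2.dvd_of_dvd_mul_right ⟨d', heq⟩
  have hmm : m = m' := Nat.dvd_antisymm h1 h2
  have hmpos : 0 < m := Nat.pos_of_dvd_of_pos hm (Nat.pos_of_ne_zero hn0)
  subst hmm
  have : d = d' := Nat.eq_of_mul_eq_mul_left hmpos heq
  simp [this]

lemma expand_cyclotomic_coprime (n : ℕ) (hn : 0 < n) {q : ℕ} (hq : 0 < q)
    (hcop : Nat.Coprime n q) :
    expand ℤ q (cyclotomic n ℤ) = ∏ d ∈ q.divisors, cyclotomic (n * d) ℤ := by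
  induction n using Nat.strong_induction_on with
  | _ n ih =>
  have key : ∏ m ∈ n.divisors, (expand ℤ q) (cyclotomic m ℤ)
      = ∏ m ∈ n.divisors, ∏ d ∈ q.divisors, cyclotomic (m * d) ℤ := by
    rw [← map_prod, Polynomial.prod_cyclotomic_eq_X_pow_sub_one hn, map_sub, map_one, map_pow,
      Polynomial.expand_X, ← pow_mul, mul_comm q n,
      ← Polynomial.prod_cyclotomic_eq_X_pow_sub_one (Nat.mul_pos hn hq),
      prod_divisors_mul_coprime hcop]
  rw [← Nat.insert_self_properDivisors hn.ne', prod_insert Nat.self_notMem_properDivisors,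
    prod_insert Nat.self_notMem_properDivisors] at key
  have tails : ∏ m ∈ n.properDivisors, (expand ℤ q) (cyclotomic m ℤ)
      = ∏ m ∈ n.properDivisors, ∏ d ∈ q.divisors, cyclotomic (m * d) ℤ := by
    refine prod_congr rfl fun m hm => ?_
    obtain ⟨hdvd, hlt⟩ := Nat.mem_properDivisors.mp hm
    exact ih m hlt (Nat.pos_of_dvd_of_pos hdvd hn) (Nat.Coprime.coprime_dvd_left hdvd hcop)
  rw [tails] at key
  have hne : ∏ m ∈ n.properDivisors, ∏ d ∈ q.divisors, cyclotomic (m * d) ℤ ≠ 0 := by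
    rw [Finset.prod_ne_zero_iff]
    intro m _
    rw [Finset.prod_ne_zero_iff]
    intro d _
    exact cyclotomic_ne_zero _ ℤ
  exact mul_right_cancel₀ hne key


lemma prod_pi_insert_aux {ι : Type*} [DecidableEq ι] {M : Type*} [CommMonoid M]
    {s : Finset ι} {a : ι} (ha : a ∉ s) (t : ι → Finset ℕ)
    (g : (∀ i, i ∈ insert a s → ℕ) → M) :
    ∏ f ∈ (insert a s).pi t, g f
      = ∏ b ∈ t a, ∏ f ∈ s.pi t, g (Pi.cons s a b f) := by
  have h₁ : ∀ x ∈ t a, ∀ y ∈ t a, x ≠ y →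
      Disjoint (image (Pi.cons s a x) (s.pi t)) (image (Pi.cons s a y) (s.pi t)) := by
    intro x _ y _ h
    simp only [disjoint_iff_ne, mem_image]
    rintro _ ⟨p₂, _, eq₂⟩ _ ⟨p₃, _, eq₃⟩ eq
    have : Pi.cons s a x p₂ a (mem_insert_self _ _)
            = Pi.cons s a y p₃ a (mem_insert_self _ _) := by rw [eq₂, eq₃, eq]
    rw [Pi.cons_same, Pi.cons_same] at this
    exact h this
  rw [pi_insert ha, prod_biUnion h₁]
  refine prod_congr rfl fun b _ => ?_
  exact prod_image fun f₁ _ f₂ _ h => Pi.cons_injective ha h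

lemma prod_attach_insert_cons {ι : Type*} [DecidableEq ι] {s : Finset ι} {a : ι} (ha : a ∉ s)
    (b : ℕ) (f : ∀ i, i ∈ s → ℕ) :
    ∏ i ∈ (insert a s).attach, Pi.cons s a b f i.1 i.2
      = b * ∏ i ∈ s.attach, f i.1 i.2 := by
  rw [attach_insert, prod_insert, prod_image]
  · rw [Pi.cons_same]
    congr 1
    refine prod_congr rfl fun x _ => ?_
    exact Pi.cons_ne fun h => ha (by rw [show a = x.1 from h]; exact x.2)
  · exact fun _ _ _ _ => Subtype.eq ∘ Subtype.mk.inj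
  · simpa only [mem_image, mem_attach, Subtype.mk.injEq, true_and,
      Subtype.exists, exists_prop, exists_eq_right] using ha

lemma powerset_insert_filter_prod {ι : Type*} [DecidableEq ι] {s : Finset ι} {a : ι} (ha : a ∉ s)
    (p : ι → ℕ) (r : ℕ) (hr : r < 2) :
    ∏ I ∈ (insert a s).powerset.filter (fun I => ((insert a s).card - I.card) % 2 = r),
        ((X : Polynomial ℤ) ^ (∏ i ∈ I, p i) - 1)
    = (∏ I ∈ s.powerset.filter (fun I => (s.card - I.card) % 2 = 1 - r),
        ((X : Polynomial ℤ) ^ (∏ i ∈ I, p i) - 1)) *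
      expand ℤ (p a) (∏ I ∈ s.powerset.filter (fun I => (s.card - I.card) % 2 = r),
        ((X : Polynomial ℤ) ^ (∏ i ∈ I, p i) - 1)) := by
  have hcard : (insert a s).card = s.card + 1 := card_insert_of_notMem ha
  have hdisj : Disjoint s.powerset (s.powerset.image (insert a)) := by
    rw [disjoint_left]
    intro I h1 h2
    rw [mem_powerset] at h1
    obtain ⟨J, _, rfl⟩ := mem_image.mp h2
    exact ha (h1 (mem_insert_self a J))
  have hinj : ∀ I ∈ s.powerset.filter (fun I => ((insert a s).card - (insert a I).card) % 2 = r),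
      ∀ J ∈ s.powerset.filter (fun I => ((insert a s).card - (insert a I).card) % 2 = r),
      insert a I = insert a J → I = J := by
    intro I hI J hJ h
    rw [mem_filter, mem_powerset] at hI hJ
    have haI : a ∉ I := fun hx => ha (hI.1 hx)
    have haJ : a ∉ J := fun hx => ha (hJ.1 hx)
    rw [← erase_insert haI, ← erase_insert haJ, h]
  rw [powerset_insert, filter_union,
    prod_union (hdisj.mono (filter_subset _ _) (filter_subset _ _))]
  congr 1
  · refine prod_congr (filter_congr fun I hI => ?_) fun _ _ => rfl
    rw [mem_powerset] at hI
    have h1 : I.card ≤ s.card := card_le_card hI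
    rw [hcard, Nat.succ_sub h1]
    omega
  · rw [filter_image, prod_image hinj]
    rw [map_prod]
    refine prod_congr (filter_congr fun I hI => ?_) fun I hI => ?_
    · rw [mem_powerset] at hI
      have haI : a ∉ I := fun hx => ha (hI hx)
      rw [hcard, card_insert_of_notMem haI, Nat.succ_sub_succ]
    · rw [mem_filter, mem_powerset] at hI
      have haI : a ∉ I := fun hx => ha (hI.1 hx)
      rw [map_sub, map_one, map_pow, expand_X, ← pow_mul, prod_insert haI]

lemma pseudo_main {ι : Type*} [DecidableEq ι] (s : Finset ι) (p : ι → ℕ)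
    (hp : ∀ i ∈ s, 0 < p i)
    (hcop : ∀ i ∈ s, ∀ j ∈ s, i ≠ j → Nat.Coprime (p i) (p j)) :
    (∏ I ∈ s.powerset.filter (fun I => (s.card - I.card) % 2 = 1),
        ((X : Polynomial ℤ) ^ (∏ i ∈ I, p i) - 1)) *
      ∏ m ∈ s.pi (fun i => (p i).divisors.filter (fun d => 1 < d)),
        cyclotomic (∏ i ∈ s.attach, m i.1 i.2) ℤ =
    ∏ I ∈ s.powerset.filter (fun I => (s.card - I.card) % 2 = 0),
        ((X : Polynomial ℤ) ^ (∏ i ∈ I, p i) - 1) := by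
  induction s using Finset.induction with
  | empty =>
    simp [cyclotomic_one]
  | insert a s ha ih =>
    set t : ι → Finset ℕ := fun i => (p i).divisors.filter (fun d => 1 < d) with ht
    have hpa : 0 < p a := hp a (mem_insert_self a s)
    have hp' : ∀ i ∈ s, 0 < p i := fun i hi => hp i (mem_insert_of_mem hi)
    have hcop' : ∀ i ∈ s, ∀ j ∈ s, i ≠ j → Nat.Coprime (p i) (p j) :=
      fun i hi j hj => hcop i (mem_insert_of_mem hi) j (mem_insert_of_mem hj)
    have IH := ih hp' hcop'
    set A := ∏ I ∈ s.powerset.filter (fun I => (s.card - I.card) % 2 = 1),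
        ((X : Polynomial ℤ) ^ (∏ i ∈ I, p i) - 1) with hA
    set B := ∏ I ∈ s.powerset.filter (fun I => (s.card - I.card) % 2 = 0),
        ((X : Polynomial ℤ) ^ (∏ i ∈ I, p i) - 1) with hB
    set F := ∏ m ∈ s.pi t, cyclotomic (∏ i ∈ s.attach, m i.1 i.2) ℤ with hF
    set F' := ∏ m ∈ (insert a s).pi t, cyclotomic (∏ i ∈ (insert a s).attach, m i.1 i.2) ℤ with hF'
    -- key: expand (p a) F = F * F'
    have hcopprod : Nat.Coprime (∏ i ∈ s, p i) (p a) := by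
      refine Nat.Coprime.prod_left fun i hi => ?_
      exact hcop i (mem_insert_of_mem hi) a (mem_insert_self a s)
        (fun h => ha (h ▸ hi))
    have hdivsplit : (p a).divisors = insert 1 (t a) := by
      ext d
      simp only [ht, mem_insert, mem_filter, Nat.mem_divisors]
      constructor
      · intro hd
        rcases Nat.lt_or_ge d 2 with h | h
        · interval_cases d
          · exact absurd (Nat.eq_zero_of_zero_dvd hd.1) hd.2
          · exact Or.inl rfl
        · exact Or.inr ⟨hd, by omega⟩
      · rintro (rfl | ⟨hd, _⟩)
        · exact ⟨one_dvd _, hpa.ne'⟩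
        · exact hd
    have hone : (1 : ℕ) ∉ t a := by simp [ht]
    have claim : expand ℤ (p a) F = F * F' := by
      rw [hF, map_prod]
      have step1 : ∀ m ∈ s.pi t,
          expand ℤ (p a) (cyclotomic (∏ i ∈ s.attach, m i.1 i.2) ℤ)
            = cyclotomic (∏ i ∈ s.attach, m i.1 i.2) ℤ *
              ∏ d ∈ t a, cyclotomic ((∏ i ∈ s.attach, m i.1 i.2) * d) ℤ := by
        intro m hm
        have hmem : ∀ i (hi : i ∈ s), m i hi ∈ t i := fun i hi => mem_pi.mp hm i hi
        have hdvd : (∏ i ∈ s.attach, m i.1 i.2) ∣ ∏ i ∈ s, p i := by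
          rw [← prod_attach s p]
          exact prod_dvd_prod_of_dvd _ _ fun i _ =>
            (Nat.mem_divisors.mp (mem_filter.mp (hmem i.1 i.2)).1).1
        have hpos : 0 < ∏ i ∈ s.attach, m i.1 i.2 := by
          refine prod_pos fun i _ => ?_
          have := (mem_filter.mp (hmem i.1 i.2)).2
          omega
        rw [expand_cyclotomic_coprime _ hpos hpa (hcopprod.coprime_dvd_left hdvd),
          hdivsplit, prod_insert hone, mul_one]
      rw [prod_congr rfl step1, prod_mul_distrib, ← hF]
      congr 1
      rw [hF', prod_pi_insert_aux ha]
      rw [prod_comm]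
      refine prod_congr rfl fun m hm => ?_
      refine prod_congr rfl fun b hb => ?_
      rw [prod_attach_insert_cons ha, mul_comm]
    calc (∏ I ∈ (insert a s).powerset.filter
            (fun I => ((insert a s).card - I.card) % 2 = 1),
            ((X : Polynomial ℤ) ^ (∏ i ∈ I, p i) - 1)) * F'
        = (B * expand ℤ (p a) A) * F' := by
          rw [powerset_insert_filter_prod ha p 1 (by norm_num)]
      _ = ((A * F) * expand ℤ (p a) A) * F' := by rw [IH]
      _ = A * (expand ℤ (p a) A * (F * F')) := by ring
      _ = A * (expand ℤ (p a) A * expand ℤ (p a) F) := by rw [claim]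
      _ = A * expand ℤ (p a) (A * F) := by rw [map_mul]
      _ = A * expand ℤ (p a) B := by rw [IH]
      _ = ∏ I ∈ (insert a s).powerset.filter
            (fun I => ((insert a s).card - I.card) % 2 = 0),
            ((X : Polynomial ℤ) ^ (∏ i ∈ I, p i) - 1) :=
          (powerset_insert_filter_prod ha p 0 (by norm_num)).symm

theorem pseudocyclotomic_eq_prod_cyclotomic (k : ℕ) (p : Fin k → ℕ)
    (hp : ∀ i, 0 < p i)
    (hcop : ∀ i j, i ≠ j → Nat.Coprime (p i) (p j))
    (f : Polynomial ℤ)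
    (hf : (∏ I ∈ (Finset.univ : Finset (Fin k)).powerset.filter
              (fun I => (k - I.card) % 2 = 1),
            ((Polynomial.X : Polynomial ℤ) ^ (∏ i ∈ I, p i) - 1)) * f =
          ∏ I ∈ (Finset.univ : Finset (Fin k)).powerset.filter
              (fun I => (k - I.card) % 2 = 0),
            ((Polynomial.X : Polynomial ℤ) ^ (∏ i ∈ I, p i) - 1)) :
    f = ∏ m ∈ Finset.univ.pi (fun i : Fin k => (p i).divisors.filter (fun d => 1 < d)),
          Polynomial.cyclotomic (∏ i : Fin k, m i (Finset.mem_univ i)) ℤ := by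
  have H := pseudo_main (univ : Finset (Fin k)) p (fun i _ => hp i)
    (fun i _ j _ hij => hcop i j hij)
  simp only [card_univ, Fintype.card_fin] at H
  have hT : ∀ m ∈ Finset.univ.pi (fun i : Fin k => (p i).divisors.filter (fun d => 1 < d)),
      (∏ i ∈ univ.attach, m i.1 i.2) = ∏ i : Fin k, m i (Finset.mem_univ i) := by
    intro m _
    exact prod_attach univ (fun i => m i (Finset.mem_univ i))
  have hTT : (∏ m ∈ Finset.univ.pi (fun i : Fin k => (p i).divisors.filter (fun d => 1 < d)),
      cyclotomic (∏ i ∈ univ.attach, m i.1 i.2) ℤ)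
      = ∏ m ∈ Finset.univ.pi (fun i : Fin k => (p i).divisors.filter (fun d => 1 < d)),
      cyclotomic (∏ i : Fin k, m i (Finset.mem_univ i)) ℤ :=
    prod_congr rfl (fun m hm => by rw [hT m hm])
  rw [hTT] at H
  have hA : (∏ I ∈ (Finset.univ : Finset (Fin k)).powerset.filter
      (fun I => (k - I.card) % 2 = 1),
      ((Polynomial.X : Polynomial ℤ) ^ (∏ i ∈ I, p i) - 1)) ≠ 0 := by
    rw [Finset.prod_ne_zero_iff]
    intro I _
    have hN : 0 < ∏ i ∈ I, p i := prod_pos fun i _ => hp i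
    have := monic_X_pow_sub_C (1 : ℤ) hN.ne'
    rw [map_one] at this
    exact this.ne_zero
  exact mul_left_cancel₀ hA (hf.trans H.symm)
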